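/- A connected graph G has local multiset dimension 1 if and only if G is bipartite. Equivalently, there exists a single vertex w such that adjacent vertices always have different distance to w if and only if G is bipartite. -/
import Mathlib


open SimpleGraph Finset

/-- The representation multiset of `u` with respect to `W`: the multiset of distances
from `u` to the vertices of `W`. -/
noncomputable def mrep {V : Type*} (G : SimpleGraph V) (u : V) (W : Finset V) : Multiset ℕ :=
  W.val.map fun w => G.dist u w

/-- `W` is a local multiset resolving set: adjacent vertices have distinct
representation multisets. -/
def IsLocalMultisetResolving {V : Type*} (G : SimpleGraph V) (W : Finset V) : Prop :=
  ∀ u v : V, G.Adj u v → mrep G u W ≠ mrep G v W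

private lemma fin2_aux (a b c : Fin 2) (h : a ≠ b) : a = c ↔ ¬ b = c := by
  revert a b c; decide

private lemma fin2_aux2 (a b c : Fin 2) (h : a ≠ b) (h2 : a = c ↔ b = c) : False := by
  revert a b c; decide

private lemma color_walk_parity {V : Type*} {G : SimpleGraph V} (C : G.Coloring (Fin 2))
    {x w : V} (p : G.Walk x w) : (C x = C w ↔ Even p.length) := by
  induction p with
  | nil => simp
  | cons h q ih =>
    rw [fin2_aux _ _ _ (C.valid h), ih]
    simp [Nat.even_add_one]

private lemma key {V : Type*} (G : SimpleGraph V)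
    (hconn : G.Connected) :
    (∃ w : V, ∀ u v : V, G.Adj u v → G.dist u w ≠ G.dist v w) ↔ G.Colorable 2 := by
  constructor
  · rintro ⟨w, hw⟩
    refine ⟨⟨fun u => ⟨G.dist u w % 2, Nat.mod_lt _ (by norm_num)⟩, ?_⟩⟩
    intro u v huv
    have h1 : G.dist u w ≤ G.dist u v + G.dist v w := hconn.dist_triangle
    have h2 : G.dist v w ≤ G.dist v u + G.dist u w := hconn.dist_triangle
    have duv : G.dist u v = 1 := SimpleGraph.dist_eq_one_iff_adj.mpr huv
    have dvu : G.dist v u = 1 := SimpleGraph.dist_eq_one_iff_adj.mpr huv.symm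
    have hne := hw u v huv
    simp only [SimpleGraph.top_adj, Fin.mk.injEq, ne_eq]
    omega
  · rintro hc
    obtain ⟨C⟩ := hc
    obtain ⟨w⟩ := hconn.nonempty
    refine ⟨w, fun u v huv hdist => ?_⟩
    obtain ⟨p, hp⟩ := hconn.exists_walk_length_eq_dist u w
    obtain ⟨q, hq⟩ := hconn.exists_walk_length_eq_dist v w
    have h1 := color_walk_parity C p
    have h2 := color_walk_parity C q
    rw [hp, hdist] at h1
    rw [hq] at h2
    exact fin2_aux2 _ _ _ (C.valid huv) (h1.trans h2.symm)

/-- A connected graph `G` (with at least one edge) has local multiset dimension 1 if and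
only if `G` is bipartite; equivalently, there is a single vertex `w` such that adjacent
vertices always have different distance to `w` iff `G` is bipartite. -/
theorem stmt_8 {V : Type*} [Fintype V] (G : SimpleGraph V)
    (hconn : G.Connected) (hedge : ∃ u v : V, G.Adj u v) :
    (sInf {k : ℕ | ∃ W : Finset V, IsLocalMultisetResolving G W ∧ W.card = k} = 1 ↔
      G.Colorable 2) ∧
    ((∃ w : V, ∀ u v : V, G.Adj u v → G.dist u w ≠ G.dist v w) ↔ G.Colorable 2) := by
  have hkey := key G hconn
  have hone : (1 ∈ {k : ℕ | ∃ W : Finset V, IsLocalMultisetResolving G W ∧ W.card = k}) ↔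
      (∃ w : V, ∀ u v : V, G.Adj u v → G.dist u w ≠ G.dist v w) := by
    constructor
    · rintro ⟨W, hW, hcard⟩
      obtain ⟨w, rfl⟩ := Finset.card_eq_one.mp hcard
      refine ⟨w, fun u v huv hd => hW u v huv ?_⟩
      simp [mrep, hd]
    · rintro ⟨w, hw⟩
      refine ⟨{w}, fun u v huv h => hw u v huv ?_, Finset.card_singleton w⟩
      simpa [mrep] using h
  have hzero : (0 : ℕ) ∉ {k : ℕ | ∃ W : Finset V, IsLocalMultisetResolving G W ∧ W.card = k} := by
    rintro ⟨W, hW, hcard⟩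
    obtain ⟨u, v, huv⟩ := hedge
    rw [Finset.card_eq_zero] at hcard
    subst hcard
    exact hW u v huv (by simp [mrep])
  constructor
  · rw [← hkey, ← hone]
    constructor
    · intro h
      have hne : {k : ℕ | ∃ W : Finset V, IsLocalMultisetResolving G W ∧ W.card = k}.Nonempty := by
        by_contra hne
        rw [Set.not_nonempty_iff_eq_empty] at hne
        rw [hne, Nat.sInf_empty] at h
        exact one_ne_zero h.symm
      have := Nat.sInf_mem hne
      rwa [h] at this
    · intro h
      have hle := Nat.sInf_le h
      have hmem := Nat.sInf_mem ⟨1, h⟩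
      interval_cases hh : sInf {k : ℕ | ∃ W : Finset V, IsLocalMultisetResolving G W ∧ W.card = k}
      · exact absurd hmem hzero
      · rfl
  · exact hkey
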